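/- The contact graph of any 3-dimensional sphere packing with generic radii contains no clique on 5 vertices. Moreover this bound is tight: there exists a 3-dimensional sphere packing with generic radii whose contact graph contains a clique on 4 vertices. -/

import Mathlib

noncomputable section

/-- A `d`-dimensional sphere packing with contact graph `G`, centres `p` and radii `r`:
the spheres have disjoint interiors and two spheres touch iff the vertices are adjacent. -/
def IsSpherePacking {V : Type*} (d : ℕ) (G : SimpleGraph V)
    (p : V → EuclideanSpace ℝ (Fin d)) (r : V → ℝ) : Prop :=
  (∀ v, 0 < r v) ∧
  ∀ v w : V, v ≠ w →
    r v + r w ≤ dist (p v) (p w) ∧ (dist (p v) (p w) = r v + r w ↔ G.Adj v w)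

/-- The radii are generic: injective and algebraically independent over `ℚ`. -/
def GenericRadii {V : Type*} (r : V → ℝ) : Prop :=
  Function.Injective r ∧ AlgebraicIndependent ℚ r

open MvPolynomial

/-- The polynomial Gram matrix of the 4 difference vectors of 5 mutually tangent spheres. -/
def gramPoly : Matrix (Fin 4) (Fin 4) (MvPolynomial (Fin 5) ℚ) :=
  Matrix.of fun i j =>
    X 0 * X 0 + X 0 * X i.succ + X 0 * X j.succ - X i.succ * X j.succ
      + if i = j then 2 * X i.succ * X i.succ else 0

set_option maxHeartbeats 1000000 in
lemma gramPoly_det_ne_zero : gramPoly.det ≠ 0 := by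
  intro h
  have h1 : (eval (fun _ => (1:ℚ))) gramPoly.det = 0 := by rw [h]; simp
  rw [RingHom.map_det] at h1
  have h2 : (eval (fun _ => (1:ℚ))).mapMatrix gramPoly
      = !![4,2,2,2;2,4,2,2;2,2,4,2;2,2,2,4] := by
    ext i j
    fin_cases i <;> fin_cases j <;>
      simp [gramPoly, Matrix.vecHead, Matrix.vecTail] <;> norm_num
  rw [h2] at h1
  simp [Matrix.det_succ_row_zero, Fin.sum_univ_succ, Fin.succAbove] at h1
  norm_num at h1

theorem no_K5 (V : Type) [Fintype V] (G : SimpleGraph V)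
    (p : V → EuclideanSpace ℝ (Fin 3)) (r : V → ℝ)
    (hpack : IsSpherePacking 3 G p r) (hgen : GenericRadii r)
    (s : Finset V) : ¬ G.IsNClique 5 s := by
  classical
  intro hclique
  obtain ⟨hcl, hcard⟩ := hclique
  obtain ⟨-, hpack2⟩ := hpack
  obtain ⟨-, hind⟩ := hgen
  -- an injection of `Fin 5` into the clique
  let e := s.equivFinOfCardEq hcard
  let f : Fin 5 → V := fun i => (e.symm i : V)
  have hf : Function.Injective f := fun i j hij => by
    apply e.symm.injective; exact Subtype.ext hij
  have hfs : ∀ i, f i ∈ s := fun i => (e.symm i).2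
  have hdist : ∀ i j : Fin 5, i ≠ j → dist (p (f i)) (p (f j)) = r (f i) + r (f j) := by
    intro i j hij
    have hne : f i ≠ f j := fun h => hij (hf h)
    exact (hpack2 _ _ hne).2.mpr (hcl (hfs i) (hfs j) hne)
  -- the four difference vectors are linearly dependent
  set q : Fin 4 → EuclideanSpace ℝ (Fin 3) := fun i => p (f i.succ) - p (f 0) with hq
  have hdep : ¬ LinearIndependent ℝ q := by
    intro h
    have := h.fintype_card_le_finrank
    rw [finrank_euclideanSpace_fin] at this
    simp at this
  obtain ⟨g, hg0, i0, hgi0⟩ := Fintype.not_linearIndependent_iff.mp hdep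
  -- hence the Gram matrix is singular
  set M : Matrix (Fin 4) (Fin 4) ℝ := Matrix.of fun i j => inner ℝ (q i) (q j) with hM
  have hMg : M.mulVec g = 0 := by
    funext i
    have : M.mulVec g i = inner ℝ (q i) (∑ j : Fin 4, g j • q j) := by
      rw [inner_sum]
      simp only [Matrix.mulVec, dotProduct, hM, Matrix.of_apply,
        real_inner_smul_right]
      exact Finset.sum_congr rfl fun j _ => mul_comm _ _
    rw [this, hg0, inner_zero_right]
    rfl
  have hdet : M.det = 0 :=
    Matrix.exists_mulVec_eq_zero_iff.mp
      ⟨g, fun h => hgi0 (by rw [h]; rfl), hMg⟩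
  -- the Gram matrix is the polynomial Gram matrix evaluated at the radii
  set Rf : Fin 5 → ℝ := fun i => r (f i) with hRf
  have hnorm : ∀ i : Fin 4, ‖q i‖ = Rf i.succ + Rf 0 := by
    intro i
    rw [hq]
    rw [← dist_eq_norm]
    exact hdist i.succ 0 (Fin.succ_ne_zero i)
  have hentry : ∀ i j : Fin 4,
      (aeval Rf).toRingHom (gramPoly i j) = M i j := by
    intro i j
    by_cases hij : i = j
    · subst hij
      simp only [gramPoly, Matrix.of_apply, eq_self_iff_true, if_true,
        AlgHom.toRingHom_eq_coe,
        RingHom.coe_coe, map_add, map_sub, map_mul, aeval_X, map_ofNat]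
      have : M i i = ‖q i‖ ^ 2 := by
        rw [hM]
        simp only [Matrix.of_apply]
        rw [real_inner_self_eq_norm_sq]
      rw [this, hnorm i]
      ring
    · simp only [gramPoly, Matrix.of_apply, if_neg hij, add_zero,
        AlgHom.toRingHom_eq_coe, RingHom.coe_coe, map_add, map_sub, map_mul, aeval_X]
      have hkey := norm_sub_sq_real (q i) (q j)
      have hsub : q i - q j = p (f i.succ) - p (f j.succ) := by
        rw [hq]; exact sub_sub_sub_cancel_right _ _ _
      have h3 : ‖q i - q j‖ = Rf i.succ + Rf j.succ := by
        rw [hsub, ← dist_eq_norm]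
        exact hdist i.succ j.succ (fun h => hij (Fin.succ_injective _ h))
      rw [h3, hnorm i, hnorm j] at hkey
      have : M i j = inner ℝ (q i) (q j) := rfl
      rw [this]
      nlinarith [hkey]
  have hdetP : (aeval Rf) gramPoly.det = 0 := by
    have := RingHom.map_det (aeval Rf).toRingHom gramPoly
    have hmat : (aeval Rf).toRingHom.mapMatrix gramPoly = M := by
      ext i j
      exact hentry i j
    rw [hmat] at this
    simpa [hdet] using this
  have hindf : AlgebraicIndependent ℚ Rf := hind.comp f hf
  exact gramPoly_det_ne_zero (algebraicIndependent_iff.mp hindf _ hdetP)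




lemma dist_eqs (a b c d s3 z : ℝ) (ha : 0 < a) (hb : 0 < b) (hc : 0 < c) (hd : 0 < d)
    (hs3pos : 0 < s3)
    (hs3 : s3 ^ 2 = a*b*c*(a+b+c))
    (hz : z ^ 2 = ((a*b*c+a*b*d+a*c*d+b*c*d)^2
        - 2*((a*b*c)^2+(a*b*d)^2+(a*c*d)^2+(b*c*d)^2)) / (a*b*c*(a+b+c))) :
    ((a*a+a*b+a*c-b*c)/(a+b))^2 + (2*s3/(a+b))^2 = (a+c)^2 ∧
    ((a*a+a*b+a*d-b*d)/(a+b))^2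
      + ((a*b*(a+b)*(c+d)-c*d*(a*a+b*b))/((a+b)*s3))^2 + z^2 = (a+d)^2 ∧
    ((a*a+a*b+a*c-b*c)/(a+b) - (a+b))^2 + (2*s3/(a+b))^2 = (b+c)^2 ∧
    ((a*a+a*b+a*d-b*d)/(a+b) - (a+b))^2
      + ((a*b*(a+b)*(c+d)-c*d*(a*a+b*b))/((a+b)*s3))^2 + z^2 = (b+d)^2 ∧
    ((a*a+a*b+a*c-b*c)/(a+b) - (a*a+a*b+a*d-b*d)/(a+b))^2
      + (2*s3/(a+b) - (a*b*(a+b)*(c+d)-c*d*(a*a+b*b))/((a+b)*s3))^2 + z^2 = (c+d)^2 := by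
  have hab : a + b ≠ 0 := by positivity
  have habc : a*b*c*(a+b+c) ≠ 0 := by positivity
  have hs3ne : s3 ≠ 0 := ne_of_gt hs3pos
  have hy3sq : (2*s3/(a+b))^2 = 4*(a*b*c*(a+b+c))/(a+b)^2 := by
    rw [div_pow, mul_pow, hs3]; ring
  have hy4sq : ((a*b*(a+b)*(c+d)-c*d*(a*a+b*b))/((a+b)*s3))^2
      = (a*b*(a+b)*(c+d)-c*d*(a*a+b*b))^2/((a+b)^2*(a*b*c*(a+b+c))) := by
    rw [div_pow, mul_pow, hs3]
  have hcross : (2*s3/(a+b)) * ((a*b*(a+b)*(c+d)-c*d*(a*a+b*b))/((a+b)*s3))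
      = 2*(a*b*(a+b)*(c+d)-c*d*(a*a+b*b))/(a+b)^2 := by
    field_simp
  refine ⟨?_, ?_, ?_, ?_, ?_⟩
  · rw [hy3sq]; field_simp; ring
  · rw [hy4sq, hz]; field_simp; ring
  · rw [hy3sq]; field_simp; ring
  · rw [hy4sq, hz]; field_simp; ring
  · have hexp : (2*s3/(a+b) - (a*b*(a+b)*(c+d)-c*d*(a*a+b*b))/((a+b)*s3))^2
        = (2*s3/(a+b))^2
          - 2*((2*s3/(a+b)) * ((a*b*(a+b)*(c+d)-c*d*(a*a+b*b))/((a+b)*s3)))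
          + ((a*b*(a+b)*(c+d)-c*d*(a*a+b*b))/((a+b)*s3))^2 := by ring
    rw [hexp, hcross, hy3sq, hy4sq, hz]; field_simp; ring


lemma dist_coords (u v : EuclideanSpace ℝ (Fin 3)) (t : ℝ) (ht : 0 ≤ t)
    (h : (u 0 - v 0)^2 + (u 1 - v 1)^2 + (u 2 - v 2)^2 = t^2) :
    dist u v = t := by
  rw [EuclideanSpace.dist_eq, Fin.sum_univ_three]
  simp only [Real.dist_eq, sq_abs]
  rw [h, Real.sqrt_sq ht]

lemma triple_bounds {x y w : ℝ} (hx : 19/20 ≤ x) (hx' : x ≤ 21/20)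
    (hy : 19/20 ≤ y) (hy' : y ≤ 21/20) (hw : 19/20 ≤ w) (hw' : w ≤ 21/20) :
    6859/8000 ≤ x*y*w ∧ x*y*w ≤ 9261/8000 := by
  have h1 : (19:ℝ)/20*(19/20) ≤ x*y := by nlinarith
  have h2 : x*y ≤ 21/20*(21/20) := by nlinarith
  constructor <;> nlinarith

lemma E_pos {u v w x : ℝ} (hu : 6859/8000 ≤ u) (hu' : u ≤ 9261/8000)
    (hv : 6859/8000 ≤ v) (hv' : v ≤ 9261/8000)
    (hw : 6859/8000 ≤ w) (hw' : w ≤ 9261/8000)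
    (hx : 6859/8000 ≤ x) (hx' : x ≤ 9261/8000) :
    0 < (u+v+w+x)^2 - 2*(u^2+v^2+w^2+x^2) := by
  nlinarith [mul_le_mul hu hu (by norm_num : (0:ℝ) ≤ 6859/8000) (by linarith),
    mul_le_mul hu hv (by norm_num : (0:ℝ) ≤ 6859/8000) (by linarith),
    mul_le_mul hu hw (by norm_num : (0:ℝ) ≤ 6859/8000) (by linarith),
    mul_le_mul hu hx (by norm_num : (0:ℝ) ≤ 6859/8000) (by linarith),
    mul_le_mul hv hw (by norm_num : (0:ℝ) ≤ 6859/8000) (by linarith),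
    mul_le_mul hv hx (by norm_num : (0:ℝ) ≤ 6859/8000) (by linarith),
    mul_le_mul hw hx (by norm_num : (0:ℝ) ≤ 6859/8000) (by linarith)]


set_option maxHeartbeats 2000000 in
lemma tangent_points (r : Fin 4 → ℝ) (hlo : ∀ i, 19/20 ≤ r i) (hhi : ∀ i, r i ≤ 21/20) :
    ∃ p : Fin 4 → EuclideanSpace ℝ (Fin 3), ∀ i j, i ≠ j → dist (p i) (p j) = r i + r j := by
  have ha0 : 0 < r 0 := lt_of_lt_of_le (by norm_num) (hlo 0)
  have hb0 : 0 < r 1 := lt_of_lt_of_le (by norm_num) (hlo 1)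
  have hc0 : 0 < r 2 := lt_of_lt_of_le (by norm_num) (hlo 2)
  have hd0 : 0 < r 3 := lt_of_lt_of_le (by norm_num) (hlo 3)
  obtain ⟨habc, habc'⟩ := triple_bounds (hlo 0) (hhi 0) (hlo 1) (hhi 1) (hlo 2) (hhi 2)
  obtain ⟨habd, habd'⟩ := triple_bounds (hlo 0) (hhi 0) (hlo 1) (hhi 1) (hlo 3) (hhi 3)
  obtain ⟨hacd, hacd'⟩ := triple_bounds (hlo 0) (hhi 0) (hlo 2) (hhi 2) (hlo 3) (hhi 3)
  obtain ⟨hbcd, hbcd'⟩ := triple_bounds (hlo 1) (hhi 1) (hlo 2) (hhi 2) (hlo 3) (hhi 3)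
  set a := r 0
  set b := r 1
  set c := r 2
  set d := r 3
  have hE : 0 < (a*b*c+a*b*d+a*c*d+b*c*d)^2
      - 2*((a*b*c)^2+(a*b*d)^2+(a*c*d)^2+(b*c*d)^2) :=
    E_pos habc habc' habd habd' hacd hacd' hbcd hbcd'
  have hK : 0 < a*b*c*(a+b+c) := by positivity
  have hs3pos : 0 < Real.sqrt (a*b*c*(a+b+c)) := Real.sqrt_pos.mpr hK
  have hs3 : Real.sqrt (a*b*c*(a+b+c)) ^ 2 = a*b*c*(a+b+c) := Real.sq_sqrt hK.le
  have hzsq : Real.sqrt (((a*b*c+a*b*d+a*c*d+b*c*d)^2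
        - 2*((a*b*c)^2+(a*b*d)^2+(a*c*d)^2+(b*c*d)^2)) / (a*b*c*(a+b+c))) ^ 2
      = ((a*b*c+a*b*d+a*c*d+b*c*d)^2
        - 2*((a*b*c)^2+(a*b*d)^2+(a*c*d)^2+(b*c*d)^2)) / (a*b*c*(a+b+c)) :=
    Real.sq_sqrt (div_nonneg hE.le hK.le)
  obtain ⟨C2, C3, C4, C5, C6⟩ := dist_eqs a b c d _ _ ha0 hb0 hc0 hd0 hs3pos hs3 hzsq
  set s3 := Real.sqrt (a*b*c*(a+b+c)) with hs3def
  set z := Real.sqrt (((a*b*c+a*b*d+a*c*d+b*c*d)^2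
        - 2*((a*b*c)^2+(a*b*d)^2+(a*c*d)^2+(b*c*d)^2)) / (a*b*c*(a+b+c))) with hzdef
  set x3 := (a*a+a*b+a*c-b*c)/(a+b) with hx3
  set y3 := 2*s3/(a+b) with hy3
  set x4 := (a*a+a*b+a*d-b*d)/(a+b) with hx4
  set y4 := (a*b*(a+b)*(c+d)-c*d*(a*a+b*b))/((a+b)*s3) with hy4
  set P0 : EuclideanSpace ℝ (Fin 3) := (WithLp.equiv 2 (Fin 3 → ℝ)).symm ![0,0,0] with hP0
  set P1 : EuclideanSpace ℝ (Fin 3) := (WithLp.equiv 2 (Fin 3 → ℝ)).symm ![a+b,0,0] with hP1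
  set P2 : EuclideanSpace ℝ (Fin 3) := (WithLp.equiv 2 (Fin 3 → ℝ)).symm ![x3,y3,0] with hP2
  set P3 : EuclideanSpace ℝ (Fin 3) := (WithLp.equiv 2 (Fin 3 → ℝ)).symm ![x4,y4,z] with hP3
  have coordsimp : ∀ (x y w : ℝ), ∀ k : Fin 3,
      ((WithLp.equiv 2 (Fin 3 → ℝ)).symm ![x,y,w]) k = ![x,y,w] k := fun _ _ _ _ => rfl
  have h01 : dist P0 P1 = r 0 + r 1 := by
    apply dist_coords _ _ _ (by linarith)
    rw [hP0, hP1]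
    simp only [coordsimp, Matrix.cons_val_zero, Matrix.cons_val_one, Matrix.head_cons,
      Matrix.cons_val_two, Matrix.tail_cons]
    ring
  have h02 : dist P0 P2 = r 0 + r 2 := by
    apply dist_coords _ _ _ (by linarith)
    rw [hP0, hP2]
    simp only [coordsimp, Matrix.cons_val_zero, Matrix.cons_val_one, Matrix.head_cons,
      Matrix.cons_val_two, Matrix.tail_cons]
    linear_combination C2
  have h03 : dist P0 P3 = r 0 + r 3 := by
    apply dist_coords _ _ _ (by linarith)
    rw [hP0, hP3]
    simp only [coordsimp, Matrix.cons_val_zero, Matrix.cons_val_one, Matrix.head_cons,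
      Matrix.cons_val_two, Matrix.tail_cons]
    linear_combination C3
  have h12 : dist P1 P2 = r 1 + r 2 := by
    apply dist_coords _ _ _ (by linarith)
    rw [hP1, hP2]
    simp only [coordsimp, Matrix.cons_val_zero, Matrix.cons_val_one, Matrix.head_cons,
      Matrix.cons_val_two, Matrix.tail_cons]
    linear_combination C4
  have h13 : dist P1 P3 = r 1 + r 3 := by
    apply dist_coords _ _ _ (by linarith)
    rw [hP1, hP3]
    simp only [coordsimp, Matrix.cons_val_zero, Matrix.cons_val_one, Matrix.head_cons,
      Matrix.cons_val_two, Matrix.tail_cons]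
    linear_combination C5
  have h23 : dist P2 P3 = r 2 + r 3 := by
    apply dist_coords _ _ _ (by linarith)
    rw [hP2, hP3]
    simp only [coordsimp, Matrix.cons_val_zero, Matrix.cons_val_one, Matrix.head_cons,
      Matrix.cons_val_two, Matrix.tail_cons]
    linear_combination C6
  have h10 : dist P1 P0 = r 1 + r 0 := by rw [dist_comm, h01]; ring
  have h20 : dist P2 P0 = r 2 + r 0 := by rw [dist_comm, h02]; ring
  have h30 : dist P3 P0 = r 3 + r 0 := by rw [dist_comm, h03]; ring
  have h21 : dist P2 P1 = r 2 + r 1 := by rw [dist_comm, h12]; ring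
  have h31 : dist P3 P1 = r 3 + r 1 := by rw [dist_comm, h13]; ring
  have h32 : dist P3 P2 = r 3 + r 2 := by rw [dist_comm, h23]; ring
  refine ⟨![P0, P1, P2, P3], ?_⟩
  intro i j hij
  fin_cases i <;> fin_cases j <;>
    first
      | exact absurd rfl hij
      | exact h01 | exact h02 | exact h03 | exact h10 | exact h12 | exact h13
      | exact h20 | exact h21 | exact h23 | exact h30 | exact h31 | exact h32



open Cardinal in
lemma exists_generic_radii :
    ∃ r : Fin 4 → ℝ, AlgebraicIndependent ℚ r ∧ ∀ i, 19/20 ≤ r i ∧ r i ≤ 21/20 := by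
  -- ℝ is transcendental over ℚ
  have htrans : Algebra.Transcendental ℚ ℝ :=
    Algebra.transcendental_def.mpr
      ⟨liouvilleNumber 3, fun H =>
        transcendental_liouvilleNumber (by norm_num : 2 ≤ 3)
          ((IsFractionRing.isAlgebraic_iff ℤ ℚ ℝ).mpr (by exact_mod_cast H))⟩
  obtain ⟨B, hB⟩ := exists_isTranscendenceBasis ℚ
    ℝ
  haveI : Nonempty B := hB.nonempty_iff_transcendental.mpr htrans
  haveI : Infinite B := by
    rw [Cardinal.infinite_iff]
    by_contra hfin
    push_neg at hfin
    have hcard := hB.lift_cardinalMk_eq_max_lift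
    simp only [Cardinal.lift_id] at hcard
    rw [Cardinal.mk_real, Cardinal.mkRat] at hcard
    have : continuum ≤ ℵ₀ := by
      rw [hcard]
      exact sup_le (sup_le le_rfl hfin.le) le_rfl
    exact (Cardinal.aleph0_lt_continuum.not_ge this)
  -- four algebraically independent reals
  let emb : Fin 4 ↪ B := Fin.valEmbedding.trans (Infinite.natEmbedding B)
  set t : Fin 4 → ℝ := fun i => (emb i : ℝ) with ht
  have htind : AlgebraicIndependent ℚ t := hB.1.comp emb emb.injective
  -- rescale into (19/20, 21/20)
  set N : Fin 4 → ℕ := fun i => ⌈|t i|⌉₊ with hN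
  set qq : Fin 4 → ℚ := fun i => 1 / (20 * (N i + 1)) with hqq
  have hqpos : ∀ i, 0 < qq i := by
    intro i
    rw [hqq]
    positivity
  set F : Fin 4 → Polynomial ℚ := fun i => Polynomial.C (qq i) * Polynomial.X
    + Polynomial.C 1 with hF
  have hFtrans : ∀ i, Transcendental ℚ (F i) := by
    intro i
    refine Polynomial.transcendental _ ?_ ?_
    · rw [hF]
      simp only
      rw [Polynomial.natDegree_linear (hqpos i).ne']
      norm_num
    · rw [hF]
      simp only
      rw [Polynomial.leadingCoeff_linear (hqpos i).ne']
      exact mem_nonZeroDivisors_of_ne_zero (hqpos i).ne'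
  refine ⟨fun i => Polynomial.aeval (t i) (F i),
    htind.polynomial_aeval_of_transcendental hFtrans, ?_⟩
  intro i
  have hval : Polynomial.aeval (t i) (F i) = (qq i : ℝ) * t i + 1 := by
    rw [hF]
    simp [Polynomial.aeval_def, Polynomial.eval₂_mul, Polynomial.eval₂_C, Polynomial.eval₂_X,
      Polynomial.eval₂_add]
  have hbound : |(qq i : ℝ) * t i| ≤ 1/20 := by
    have h1 : |t i| ≤ (N i : ℝ) + 1 := by
      rw [hN]
      simp only
      exact le_trans (Nat.le_ceil _) (by norm_num)
    have h2 : ((qq i : ℝ)) = 1 / (20 * ((N i : ℝ) + 1)) := by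
      rw [hqq]
      push_cast
      norm_num
    rw [abs_mul, h2]
    have hNpos : (0:ℝ) < 20 * ((N i : ℝ) + 1) := by positivity
    rw [abs_of_pos (by positivity : (0:ℝ) < 1 / (20 * ((N i : ℝ) + 1)))]
    rw [div_mul_eq_mul_div, one_mul, div_le_div_iff₀ hNpos (by norm_num : (0:ℝ) < 20)]
    nlinarith [h1]
  simp only [hval]
  have := abs_le.mp hbound
  constructor <;> linarith [this.1, this.2]


theorem K4_tight :
    ∃ (n : ℕ) (G : SimpleGraph (Fin n))
        (p : Fin n → EuclideanSpace ℝ (Fin 3)) (r : Fin n → ℝ) (s : Finset (Fin n)),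
      IsSpherePacking 3 G p r ∧ GenericRadii r ∧ G.IsNClique 4 s := by
  obtain ⟨r, hind, hbounds⟩ := exists_generic_radii
  obtain ⟨p, hp⟩ := tangent_points r (fun i => (hbounds i).1) (fun i => (hbounds i).2)
  refine ⟨4, ⊤, p, r, Finset.univ, ⟨?_, ?_⟩, ⟨hind.injective, hind⟩, ?_, ?_⟩
  · intro v
    linarith [(hbounds v).1]
  · intro v w hvw
    refine ⟨le_of_eq (hp v w hvw).symm, ?_, fun _ => hp v w hvw⟩
    intro _
    exact (SimpleGraph.top_adj _ _).mpr hvw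
  · intro x _ y _ hxy
    exact (SimpleGraph.top_adj _ _).mpr hxy
  · simp

/-- The contact graph of a generic-radii sphere packing contains no clique on 5 vertices,
and this is tight: some generic-radii sphere packing has a clique on 4 vertices. -/
theorem generic_no_K5_and_K4_tight :
    (∀ (V : Type) [Fintype V] (G : SimpleGraph V)
        (p : V → EuclideanSpace ℝ (Fin 3)) (r : V → ℝ),
      IsSpherePacking 3 G p r → GenericRadii r →
      ∀ s : Finset V, ¬ G.IsNClique 5 s) ∧
    (∃ (n : ℕ) (G : SimpleGraph (Fin n))
        (p : Fin n → EuclideanSpace ℝ (Fin 3)) (r : Fin n → ℝ) (s : Finset (Fin n)),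
      IsSpherePacking 3 G p r ∧ GenericRadii r ∧ G.IsNClique 4 s) :=
  ⟨fun V _ G p r hpack hgen s => no_K5 V G p r hpack hgen s, K4_tight⟩

end
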